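/- For every integer n ≥ 1 and every real number x, x·𝔠'_n(x) = ∑_{k=0}^{n−1} binom(n,k) · 𝔠_k(x) · 𝔠_{n−k}(x), where 𝔠'_n denotes the derivative of the polynomial function x ↦ 𝔠_n(x). -/

import Mathlib

open Nat Finset

/-- Central factorial numbers of the second kind. -/
noncomputable def centralT (n k : ℕ) : ℝ :=
  (1 / (k ! : ℝ)) * ∑ j ∈ Finset.range (k + 1),
    (-1 : ℝ) ^ j * (k.choose j : ℝ) * ((k : ℝ) / 2 - (j : ℝ)) ^ n

/-- Central Fubini-like polynomials. -/
noncomputable def centralFubini (n : ℕ) (x : ℝ) : ℝ :=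
  ∑ k ∈ Finset.range (n + 1), (k ! : ℝ) * centralT n k * x ^ k

/-- Coefficient sums. -/
noncomputable def cA (a k : ℕ) : ℝ :=
  ∑ j ∈ Finset.range (a + 1), (-1 : ℝ) ^ j * (a.choose j : ℝ) * ((a : ℝ) / 2 - (j : ℝ)) ^ k

lemma altR : ∀ m a : ℕ, m < a →
    ∑ j ∈ Finset.range (a + 1), (-1 : ℝ) ^ j * (a.choose j : ℝ) * (j : ℝ) ^ m = 0 := by
  intro m
  induction m using Nat.strong_induction_on with
  | _ m ih =>
    intro a hma
    match m with
    | 0 =>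
      have h := add_pow (-1 : ℝ) 1 a
      rw [neg_add_cancel, zero_pow (by omega)] at h
      simp only [pow_zero, mul_one, one_pow] at h ⊢
      exact h.symm
    | m + 1 =>
      obtain ⟨c, rfl⟩ : ∃ c, a = c + 1 := ⟨a - 1, by omega⟩
      rw [Finset.sum_range_succ']
      simp only [Nat.cast_zero, zero_pow (Nat.succ_ne_zero m), mul_zero, add_zero]
      have hterm : ∀ i : ℕ, (-1 : ℝ) ^ (i + 1) * ((c + 1).choose (i + 1) : ℝ) *
          ((i : ℝ) + 1) ^ (m + 1)
          = (-(c + 1 : ℝ)) * ((-1 : ℝ) ^ i * (c.choose i : ℝ) * ((i : ℝ) + 1) ^ m) := by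
        intro i
        have h1 : ((c + 1 : ℕ) : ℝ) * (c.choose i : ℝ) =
            ((c + 1).choose (i + 1) : ℝ) * ((i : ℝ) + 1) := by
          have := Nat.add_one_mul_choose_eq c i
          have : ((c.succ * c.choose i : ℕ) : ℝ) = ((c.succ.choose i.succ * i.succ : ℕ) : ℝ) := by
            rw [this]
          push_cast at this ⊢
          linarith [this]
        push_cast at h1
        calc (-1 : ℝ) ^ (i + 1) * ((c + 1).choose (i + 1) : ℝ) * ((i : ℝ) + 1) ^ (m + 1)
            = -((-1 : ℝ) ^ i) * (((c + 1).choose (i + 1) : ℝ) * ((i : ℝ) + 1)) *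
                ((i : ℝ) + 1) ^ m := by rw [pow_succ, pow_succ]; ring
          _ = -((-1 : ℝ) ^ i) * (((c : ℝ) + 1) * (c.choose i : ℝ)) * ((i : ℝ) + 1) ^ m := by
                rw [← h1]
          _ = (-(c + 1 : ℝ)) * ((-1 : ℝ) ^ i * (c.choose i : ℝ) * ((i : ℝ) + 1) ^ m) := by
                ring
      have hstep : ∑ i ∈ Finset.range (c + 1), (-1 : ℝ) ^ (i + 1) * ((c + 1).choose (i + 1) : ℝ) *
              ((i + 1 : ℕ) : ℝ) ^ (m + 1)
          = (-(c + 1 : ℝ)) * ∑ i ∈ Finset.range (c + 1),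
              ((-1 : ℝ) ^ i * (c.choose i : ℝ) * ((i : ℝ) + 1) ^ m) := by
        rw [Finset.mul_sum]
        apply Finset.sum_congr rfl
        intro i _
        push_cast
        exact hterm i
      rw [hstep]
      have hrest : ∑ i ∈ Finset.range (c + 1),
              ((-1 : ℝ) ^ i * (c.choose i : ℝ) * ((i : ℝ) + 1) ^ m) = 0 := by
            have hexp : ∀ i : ℕ, ((i : ℝ) + 1) ^ m
                = ∑ p ∈ Finset.range (m + 1), (i : ℝ) ^ p * (m.choose p : ℝ) := by
              intro i
              rw [add_pow]
              exact Finset.sum_congr rfl fun p _ => by rw [one_pow, mul_one]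
            have : ∑ i ∈ Finset.range (c + 1),
                ((-1 : ℝ) ^ i * (c.choose i : ℝ) * ((i : ℝ) + 1) ^ m) = 0 := by
              calc ∑ i ∈ Finset.range (c + 1),
                    ((-1 : ℝ) ^ i * (c.choose i : ℝ) * ((i : ℝ) + 1) ^ m)
                  = ∑ i ∈ Finset.range (c + 1), ∑ p ∈ Finset.range (m + 1),
                      (m.choose p : ℝ) * ((-1 : ℝ) ^ i * (c.choose i : ℝ) * (i : ℝ) ^ p) := by
                    apply Finset.sum_congr rfl
                    intro i _
                    rw [hexp i, Finset.mul_sum]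
                    exact Finset.sum_congr rfl fun p _ => by ring
                _ = ∑ p ∈ Finset.range (m + 1), (m.choose p : ℝ) *
                      ∑ i ∈ Finset.range (c + 1),
                        ((-1 : ℝ) ^ i * (c.choose i : ℝ) * (i : ℝ) ^ p) := by
                    rw [Finset.sum_comm]
                    exact Finset.sum_congr rfl fun p _ => by rw [Finset.mul_sum]
                _ = 0 := by
                    apply Finset.sum_eq_zero
                    intro p hp
                    have hp' := Finset.mem_range.mp hp
                    rw [ih p (by omega) c (by omega), mul_zero]
            exact this
      rw [hrest, mul_zero]

lemma altKill (a k : ℕ) (h : k < a) (y : ℝ) :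
    ∑ j ∈ Finset.range (a + 1), (-1 : ℝ) ^ j * (a.choose j : ℝ) * (y - (j : ℝ)) ^ k = 0 := by
  calc ∑ j ∈ Finset.range (a + 1), (-1 : ℝ) ^ j * (a.choose j : ℝ) * (y - (j : ℝ)) ^ k
      = ∑ j ∈ Finset.range (a + 1), ∑ p ∈ Finset.range (k + 1),
          (y ^ p * (-1 : ℝ) ^ (k - p) * (k.choose p : ℝ)) *
            ((-1 : ℝ) ^ j * (a.choose j : ℝ) * (j : ℝ) ^ (k - p)) := by
        apply Finset.sum_congr rfl
        intro j _
        rw [sub_eq_add_neg, add_pow, Finset.mul_sum]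
        apply Finset.sum_congr rfl
        intro p _
        rw [neg_pow (j : ℝ) (k - p)]
        ring
    _ = ∑ p ∈ Finset.range (k + 1), (y ^ p * (-1 : ℝ) ^ (k - p) * (k.choose p : ℝ)) *
          ∑ j ∈ Finset.range (a + 1), ((-1 : ℝ) ^ j * (a.choose j : ℝ) * (j : ℝ) ^ (k - p)) := by
        rw [Finset.sum_comm]
        exact Finset.sum_congr rfl fun p _ => by rw [Finset.mul_sum]
    _ = 0 := by
        apply Finset.sum_eq_zero
        intro p _
        rw [altR (k - p) a (by omega), mul_zero]

lemma cA_eq_zero {a k : ℕ} (h : k < a) : cA a k = 0 := altKill a k h _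

lemma cA_zero_pos {b : ℕ} (h : 0 < b) : cA b 0 = 0 := by
  have := altR 0 b h
  simpa only [pow_zero, mul_one, cA] using this

lemma cA_zero_zero : cA 0 0 = 1 := by
  simp [cA]

lemma centralFubini_eq (n : ℕ) (x : ℝ) :
    centralFubini n x = ∑ a ∈ Finset.range (n + 1), cA a n * x ^ a := by
  unfold centralFubini centralT cA
  apply Finset.sum_congr rfl
  intro k _
  have : (k ! : ℝ) ≠ 0 := Nat.cast_ne_zero.mpr (Nat.factorial_ne_zero k)
  field_simp

lemma centralFubini_ext {k n : ℕ} (h : k ≤ n) (x : ℝ) :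
    centralFubini k x = ∑ a ∈ Finset.range (n + 1), cA a k * x ^ a := by
  rw [centralFubini_eq]
  apply Finset.sum_subset
  · exact Finset.range_subset_range.mpr (by omega)
  · intro a ha hna
    rw [cA_eq_zero (by
      have := Finset.mem_range.mp ha
      have h2 : ¬ a < k + 1 := fun hc => hna (Finset.mem_range.mpr hc)
      omega), zero_mul]

lemma cfSlice (N : ℕ) (h : ℕ × ℕ → ℝ) (hz : ∀ p : ℕ × ℕ, N < p.1 + p.2 → h p = 0) :
    ∑ p ∈ Finset.range (N + 1) ×ˢ Finset.range (N + 1), h p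
      = ∑ m ∈ Finset.range (N + 1), ∑ p ∈ Finset.HasAntidiagonal.antidiagonal m, h p := by
  have hdisj : (↑(Finset.range (N + 1)) : Set ℕ).PairwiseDisjoint Finset.HasAntidiagonal.antidiagonal := by
    intro m _ m' _ hne
    apply Finset.disjoint_left.mpr
    intro p hp hp'
    exact hne ((Finset.HasAntidiagonal.mem_antidiagonal.mp hp).symm.trans (Finset.HasAntidiagonal.mem_antidiagonal.mp hp'))
  rw [← Finset.sum_biUnion hdisj]
  symm
  apply Finset.sum_subset
  · intro p hp
    obtain ⟨m, hm, hpm⟩ := Finset.mem_biUnion.mp hp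
    have hm' := Finset.mem_range.mp hm
    have hpm' := Finset.HasAntidiagonal.mem_antidiagonal.mp hpm
    exact Finset.mem_product.mpr ⟨Finset.mem_range.mpr (by omega), Finset.mem_range.mpr (by omega)⟩
  · intro p hp hnp
    apply hz
    by_contra hc
    push_neg at hc
    exact hnp (Finset.mem_biUnion.mpr ⟨p.1 + p.2, Finset.mem_range.mpr (by omega),
      Finset.HasAntidiagonal.mem_antidiagonal.mpr rfl⟩)

lemma conv (n a b : ℕ) :
    ∑ k ∈ Finset.range (n + 1), (n.choose k : ℝ) * cA a k * cA b (n - k) = cA (a + b) n := by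
  have step1 : ∑ k ∈ Finset.range (n + 1), (n.choose k : ℝ) * cA a k * cA b (n - k)
      = ∑ j ∈ Finset.range (a + 1), ∑ i ∈ Finset.range (b + 1),
          ((-1 : ℝ) ^ j * (a.choose j : ℝ)) * ((-1 : ℝ) ^ i * (b.choose i : ℝ)) *
            (((a : ℝ) / 2 - j) + ((b : ℝ) / 2 - i)) ^ n := by
    calc ∑ k ∈ Finset.range (n + 1), (n.choose k : ℝ) * cA a k * cA b (n - k)
        = ∑ k ∈ Finset.range (n + 1), ∑ j ∈ Finset.range (a + 1), ∑ i ∈ Finset.range (b + 1),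
            ((-1 : ℝ) ^ j * (a.choose j : ℝ)) * ((-1 : ℝ) ^ i * (b.choose i : ℝ)) *
              (((a : ℝ) / 2 - j) ^ k * ((b : ℝ) / 2 - i) ^ (n - k) * (n.choose k : ℝ)) := by
          apply Finset.sum_congr rfl
          intro k _
          unfold cA
          rw [mul_assoc, Finset.sum_mul_sum, Finset.mul_sum]
          apply Finset.sum_congr rfl
          intro j _
          rw [Finset.mul_sum]
          apply Finset.sum_congr rfl
          intro i _
          ring
      _ = ∑ j ∈ Finset.range (a + 1), ∑ i ∈ Finset.range (b + 1),
            ((-1 : ℝ) ^ j * (a.choose j : ℝ)) * ((-1 : ℝ) ^ i * (b.choose i : ℝ)) *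
              ∑ k ∈ Finset.range (n + 1),
                (((a : ℝ) / 2 - j) ^ k * ((b : ℝ) / 2 - i) ^ (n - k) * (n.choose k : ℝ)) := by
          rw [Finset.sum_comm]
          apply Finset.sum_congr rfl
          intro j _
          rw [Finset.sum_comm]
          apply Finset.sum_congr rfl
          intro i _
          rw [Finset.mul_sum]
      _ = _ := by
          apply Finset.sum_congr rfl
          intro j _
          apply Finset.sum_congr rfl
          intro i _
          rw [← add_pow]
  rw [step1]
  have hsq : ∑ j ∈ Finset.range (a + 1), ∑ i ∈ Finset.range (b + 1),
        ((-1 : ℝ) ^ j * (a.choose j : ℝ)) * ((-1 : ℝ) ^ i * (b.choose i : ℝ)) *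
          (((a : ℝ) / 2 - j) + ((b : ℝ) / 2 - i)) ^ n
      = ∑ p ∈ Finset.range (a + b + 1) ×ˢ Finset.range (a + b + 1),
          ((-1 : ℝ) ^ p.1 * (a.choose p.1 : ℝ)) * ((-1 : ℝ) ^ p.2 * (b.choose p.2 : ℝ)) *
            (((a : ℝ) / 2 - p.1) + ((b : ℝ) / 2 - p.2)) ^ n := by
    rw [Finset.sum_product]
    have hsub : ∀ j ∈ Finset.range (a + 1), ∑ i ∈ Finset.range (b + 1),
          ((-1 : ℝ) ^ j * (a.choose j : ℝ)) * ((-1 : ℝ) ^ i * (b.choose i : ℝ)) *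
            (((a : ℝ) / 2 - j) + ((b : ℝ) / 2 - i)) ^ n
        = ∑ i ∈ Finset.range (a + b + 1),
          ((-1 : ℝ) ^ j * (a.choose j : ℝ)) * ((-1 : ℝ) ^ i * (b.choose i : ℝ)) *
            (((a : ℝ) / 2 - j) + ((b : ℝ) / 2 - i)) ^ n := by
      intro j _
      apply Finset.sum_subset (Finset.range_subset_range.mpr (by omega))
      intro i hi hni
      have : b < i := by
        have := Finset.mem_range.mp hi
        have h2 : ¬ i < b + 1 := fun hc => hni (Finset.mem_range.mpr hc)
        omega
      rw [Nat.choose_eq_zero_of_lt this]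
      simp
    rw [Finset.sum_congr rfl hsub]
    apply Finset.sum_subset (Finset.range_subset_range.mpr (by omega))
    intro j hj hnj
    have : a < j := by
      have := Finset.mem_range.mp hj
      have h2 : ¬ j < a + 1 := fun hc => hnj (Finset.mem_range.mpr hc)
      omega
    rw [Nat.choose_eq_zero_of_lt this]
    simp
  rw [hsq]
  rw [cfSlice (a + b) (fun p => ((-1 : ℝ) ^ p.1 * (a.choose p.1 : ℝ)) *
      ((-1 : ℝ) ^ p.2 * (b.choose p.2 : ℝ)) * (((a : ℝ) / 2 - p.1) + ((b : ℝ) / 2 - p.2)) ^ n)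
      (by
        intro p hji
        show ((-1 : ℝ) ^ p.1 * (a.choose p.1 : ℝ)) *
          ((-1 : ℝ) ^ p.2 * (b.choose p.2 : ℝ)) *
          (((a : ℝ) / 2 - p.1) + ((b : ℝ) / 2 - p.2)) ^ n = 0
        rcases Nat.lt_or_ge a p.1 with hja | hja
        · rw [Nat.choose_eq_zero_of_lt hja]; simp
        · have : b < p.2 := by omega
          rw [Nat.choose_eq_zero_of_lt this]; simp)]
  unfold cA
  apply Finset.sum_congr rfl
  intro m hm
  have key : ∀ p ∈ Finset.HasAntidiagonal.antidiagonal m,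
      ((-1 : ℝ) ^ p.1 * (a.choose p.1 : ℝ)) * ((-1 : ℝ) ^ p.2 * (b.choose p.2 : ℝ)) *
        (((a : ℝ) / 2 - p.1) + ((b : ℝ) / 2 - p.2)) ^ n
      = ((a.choose p.1 : ℝ) * (b.choose p.2 : ℝ)) *
        ((-1 : ℝ) ^ m * (((a + b : ℕ) : ℝ) / 2 - m) ^ n) := by
    intro p hp
    have hpm := Finset.HasAntidiagonal.mem_antidiagonal.mp hp
    have h1 : ((a : ℝ) / 2 - p.1) + ((b : ℝ) / 2 - p.2) = ((a + b : ℕ) : ℝ) / 2 - m := by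
      rw [← hpm]
      push_cast
      ring
    rw [h1, ← hpm, pow_add]
    ring
  rw [Finset.sum_congr rfl key, ← Finset.sum_mul]
  have hv : ∑ p ∈ Finset.HasAntidiagonal.antidiagonal m, ((a.choose p.1 : ℝ) * (b.choose p.2 : ℝ))
      = (((a + b).choose m : ℕ) : ℝ) := by
    rw [Nat.add_choose_eq]
    push_cast
    rfl
  rw [hv]
  ring

lemma hasDerivAt_cF (n : ℕ) (x : ℝ) :
    HasDerivAt (fun y : ℝ => centralFubini n y)
      (∑ a ∈ Finset.range (n + 1), cA a n * ((a : ℝ) * x ^ (a - 1))) x := by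
  have hfun : (fun y : ℝ => centralFubini n y)
      = fun y : ℝ => ∑ a ∈ Finset.range (n + 1), cA a n * y ^ a :=
    funext fun y => centralFubini_eq n y
  rw [hfun]
  exact HasDerivAt.fun_sum fun a _ => (hasDerivAt_pow a x).const_mul (cA a n)

lemma full_sum (n : ℕ) (x : ℝ) :
    ∑ k ∈ Finset.range (n + 1),
        (n.choose k : ℝ) * centralFubini k x * centralFubini (n - k) x
      = ∑ m ∈ Finset.range (n + 1), ((m : ℝ) + 1) * (cA m n * x ^ m) := by
  calc ∑ k ∈ Finset.range (n + 1),
        (n.choose k : ℝ) * centralFubini k x * centralFubini (n - k) x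
      = ∑ k ∈ Finset.range (n + 1), ∑ a ∈ Finset.range (n + 1), ∑ b ∈ Finset.range (n + 1),
          (x ^ a * x ^ b) * ((n.choose k : ℝ) * cA a k * cA b (n - k)) := by
        apply Finset.sum_congr rfl
        intro k hk
        have hk' : k ≤ n := by have := Finset.mem_range.mp hk; omega
        rw [centralFubini_ext hk' x, centralFubini_ext (Nat.sub_le n k) x,
          mul_assoc, Finset.sum_mul_sum, Finset.mul_sum]
        apply Finset.sum_congr rfl
        intro a _
        rw [Finset.mul_sum]
        apply Finset.sum_congr rfl
        intro b _
        ring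
    _ = ∑ a ∈ Finset.range (n + 1), ∑ b ∈ Finset.range (n + 1),
          (x ^ a * x ^ b) * ∑ k ∈ Finset.range (n + 1),
            ((n.choose k : ℝ) * cA a k * cA b (n - k)) := by
        rw [Finset.sum_comm]
        apply Finset.sum_congr rfl
        intro a _
        rw [Finset.sum_comm]
        apply Finset.sum_congr rfl
        intro b _
        rw [Finset.mul_sum]
    _ = ∑ a ∈ Finset.range (n + 1), ∑ b ∈ Finset.range (n + 1),
          cA (a + b) n * x ^ (a + b) := by
        apply Finset.sum_congr rfl
        intro a _
        apply Finset.sum_congr rfl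
        intro b _
        rw [conv n a b, pow_add]
        ring
    _ = ∑ p ∈ Finset.range (n + 1) ×ˢ Finset.range (n + 1),
          cA (p.1 + p.2) n * x ^ (p.1 + p.2) := by
        rw [Finset.sum_product]
    _ = ∑ m ∈ Finset.range (n + 1), ∑ p ∈ Finset.HasAntidiagonal.antidiagonal m,
          cA (p.1 + p.2) n * x ^ (p.1 + p.2) := by
        exact cfSlice n (fun p => cA (p.1 + p.2) n * x ^ (p.1 + p.2))
          (fun p hp => by
            show cA (p.1 + p.2) n * x ^ (p.1 + p.2) = 0
            rw [cA_eq_zero hp, zero_mul])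
    _ = ∑ m ∈ Finset.range (n + 1), ((m : ℝ) + 1) * (cA m n * x ^ m) := by
        apply Finset.sum_congr rfl
        intro m _
        have : ∀ p ∈ Finset.HasAntidiagonal.antidiagonal m,
            cA (p.1 + p.2) n * x ^ (p.1 + p.2) = cA m n * x ^ m := by
          intro p hp
          rw [Finset.HasAntidiagonal.mem_antidiagonal.mp hp]
        rw [Finset.sum_congr rfl this, Finset.sum_const, Nat.card_antidiagonal,
          nsmul_eq_mul]
        push_cast
        ring

lemma centralFubini_zero (x : ℝ) : centralFubini 0 x = 1 := by
  unfold centralFubini centralT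
  norm_num

theorem central_fubini_deriv_convolution (n : ℕ) (hn : 1 ≤ n) (x : ℝ) :
    x * deriv (fun y : ℝ => centralFubini n y) x =
      ∑ k ∈ Finset.range n, (n.choose k : ℝ) * centralFubini k x * centralFubini (n - k) x := by
  have hderiv : deriv (fun y : ℝ => centralFubini n y) x
      = ∑ a ∈ Finset.range (n + 1), cA a n * ((a : ℝ) * x ^ (a - 1)) :=
    (hasDerivAt_cF n x).deriv
  have hlhs : x * deriv (fun y : ℝ => centralFubini n y) x
      = ∑ a ∈ Finset.range (n + 1), (a : ℝ) * (cA a n * x ^ a) := by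
    rw [hderiv, Finset.mul_sum]
    apply Finset.sum_congr rfl
    intro a _
    match a with
    | 0 => simp
    | a + 1 =>
      have : (a + 1) - 1 = a := rfl
      rw [this]
      push_cast
      ring
  have hsplit := Finset.sum_range_succ
    (fun k => (n.choose k : ℝ) * centralFubini k x * centralFubini (n - k) x) n
  rw [full_sum n x] at hsplit
  have hlast : (n.choose n : ℝ) * centralFubini n x * centralFubini (n - n) x
      = centralFubini n x := by
    rw [Nat.choose_self, Nat.sub_self, centralFubini_zero]
    push_cast
    ring
  rw [hlast] at hsplit
  have hrhs : ∑ k ∈ Finset.range n, (n.choose k : ℝ) * centralFubini k x * centralFubini (n - k) x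
      = ∑ m ∈ Finset.range (n + 1), ((m : ℝ) + 1) * (cA m n * x ^ m) - centralFubini n x := by
    linarith [hsplit]
  rw [hlhs, hrhs, centralFubini_eq n x]
  rw [← Finset.sum_sub_distrib]
  apply Finset.sum_congr rfl
  intro m _
  ring
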